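/- Let L ∈ ℝ^{M×M} (M ≥ 2) be a symmetric matrix whose off-diagonal entries are nonpositive, satisfying L·𝟏 = 0 (every row sums to zero), and irreducible. Then for any index i ∈ {1,…,M}, the (M−1)×(M−1) principal submatrix L̃ obtained from L by deleting the i-th row and the i-th column is positive definite (equivalently, −L̃ is Hurwitz). -/

import Mathlib

open Matrix

/-- A matrix is irreducible if for every nonempty proper subset `S` of the index set
there exist `i ∈ S` and `j ∉ S` with `L i j ≠ 0`. -/
def MatIrreducible {M : ℕ} (L : Matrix (Fin M) (Fin M) ℝ) : Prop :=
  ∀ S : Finset (Fin M), S.Nonempty → S ≠ Finset.univ →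
    ∃ i ∈ S, ∃ j, j ∉ S ∧ L i j ≠ 0

lemma quad_identity {M : ℕ} (L : Matrix (Fin (M + 2)) (Fin (M + 2)) ℝ)
    (hsym : L.IsSymm)
    (hone : L *ᵥ (fun _ => (1 : ℝ)) = 0)
    (y : Fin (M+2) → ℝ) :
    (2:ℝ) * (y ⬝ᵥ (L *ᵥ y)) = ∑ j, ∑ k, (-L j k) * (y j - y k)^2 := by
  have hrow : ∀ j, ∑ k, L j k = 0 := by
    intro j
    have := congrFun hone j
    simpa [mulVec, dotProduct] using this
  have hcol : ∀ k, ∑ j, L j k = 0 := by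
    intro k
    have : ∀ j, L j k = L k j := fun j => by rw [← hsym.apply]
    simp only [this]
    exact hrow k
  have e1 : ∑ j, ∑ k, (-L j k) * (y j - y k)^2
      = ∑ j, ∑ k, (2*(L j k * y j * y k) - L j k * y j^2 - L j k * y k^2) := by
    apply Finset.sum_congr rfl; intros j _
    apply Finset.sum_congr rfl; intros k _
    ring
  rw [e1]
  have e2 : ∑ j, ∑ k, (2*(L j k * y j * y k) - L j k * y j^2 - L j k * y k^2)
      = (∑ j, ∑ k, 2*(L j k * y j * y k)) - (∑ j, ∑ k, L j k * y j^2)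
        - (∑ j, ∑ k, L j k * y k^2) := by
    simp [Finset.sum_sub_distrib]
  rw [e2]
  have e3 : ∑ j, ∑ k, L j k * y j^2 = 0 := by
    apply Finset.sum_eq_zero; intro j _
    rw [← Finset.sum_mul, hrow j, zero_mul]
  have e4 : ∑ j, ∑ k, L j k * y k^2 = 0 := by
    rw [Finset.sum_comm]
    apply Finset.sum_eq_zero; intro k _
    rw [← Finset.sum_mul, hcol k, zero_mul]
  rw [e3, e4]
  simp [dotProduct, mulVec, Finset.mul_sum, mul_comm, mul_assoc, mul_left_comm]

/-- If `L ∈ ℝ^{M×M}` (`M ≥ 2`) is symmetric, has nonpositive off-diagonal entries,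
satisfies `L·𝟏 = 0` and is irreducible, then deleting the `i`-th row and column yields
a positive definite matrix. -/
theorem stmt0 {M : ℕ} (L : Matrix (Fin (M + 2)) (Fin (M + 2)) ℝ)
    (hsym : L.IsSymm)
    (hoff : ∀ i j, i ≠ j → L i j ≤ 0)
    (hone : L *ᵥ (fun _ => (1 : ℝ)) = 0)
    (hirr : MatIrreducible L)
    (i : Fin (M + 2)) :
    (L.submatrix i.succAbove i.succAbove).PosDef := by
  classical
  rw [Matrix.posDef_iff_dotProduct_mulVec]
  constructor
  · -- Hermitian
    unfold Matrix.IsHermitian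
    ext a b
    simp [Matrix.submatrix, Matrix.conjTranspose, ← hsym.apply]
  · intro x hx
    set y : Fin (M+2) → ℝ := i.insertNth 0 x with hy
    have hyi : y i = 0 := by rw [hy]; simp
    have hyk : ∀ k, y (i.succAbove k) = x k := by
      intro k; rw [hy]; simp
    -- rewrite the goal quadratic form as y ⬝ᵥ L *ᵥ y
    have hquad : (star x) ⬝ᵥ ((L.submatrix i.succAbove i.succAbove) *ᵥ x)
        = y ⬝ᵥ (L *ᵥ y) := by
      simp only [dotProduct, mulVec, star, Matrix.submatrix_apply]
      rw [Fin.sum_univ_succAbove (fun j => y j * ∑ k, L j k * y k) i]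
      rw [hyi, zero_mul, zero_add]
      apply Finset.sum_congr rfl
      intro a _
      rw [hyk]
      congr 1
      rw [Fin.sum_univ_succAbove (fun k => L (i.succAbove a) k * y k) i]
      rw [hyi, mul_zero, zero_add]
      apply Finset.sum_congr rfl
      intro b _
      rw [hyk]
    have hid := quad_identity L hsym hone y
    -- nonnegativity of each term
    have hterm : ∀ j k : Fin (M+2), 0 ≤ (-L j k) * (y j - y k)^2 := by
      intro j k
      rcases eq_or_ne j k with h | h
      · simp [h]
      · exact mul_nonneg (by linarith [hoff j k h]) (sq_nonneg _)
    have hnonneg : 0 ≤ y ⬝ᵥ (L *ᵥ y) := by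
      nlinarith [Finset.sum_nonneg (fun j (_ : j ∈ Finset.univ) =>
        Finset.sum_nonneg (fun k (_ : k ∈ Finset.univ) => hterm j k))]
    have hpos : y ⬝ᵥ (L *ᵥ y) ≠ 0 := by
      intro h0
      -- all terms vanish
      have hsum0 : ∑ j, ∑ k, (-L j k) * (y j - y k)^2 = 0 := by
        rw [← hid, h0, mul_zero]
      have hall : ∀ j k : Fin (M+2), L j k ≠ 0 → y j = y k := by
        intro j k hL
        have h1 := (Finset.sum_eq_zero_iff_of_nonneg
          (fun j _ => Finset.sum_nonneg (fun k _ => hterm j k))).mp hsum0 j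
          (Finset.mem_univ j)
        have h2 := (Finset.sum_eq_zero_iff_of_nonneg
          (fun k _ => hterm j k)).mp h1 k (Finset.mem_univ k)
        rcases eq_or_ne j k with h | h
        · rw [h]
        · rcases mul_eq_zero.mp h2 with h3 | h3
          · exact absurd (by linarith : L j k = 0) hL
          · have := pow_eq_zero_iff (n := 2) (by norm_num) |>.mp h3
            linarith
      -- y is constant, hence zero, hence x = 0
      set S : Finset (Fin (M+2)) := Finset.univ.filter (fun j => y j = 0) with hS
      have hiS : i ∈ S := by simp [hS, hyi]
      have hSuniv : S = Finset.univ := by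
        by_contra hne
        obtain ⟨a, ha, b, hb, hL⟩ := hirr S ⟨i, hiS⟩ hne
        have hya : y a = 0 := by simpa [hS] using ha
        have hyb : y b ≠ 0 := by simpa [hS] using hb
        exact hyb (by rw [← hall a b hL, hya])
      have hy0 : ∀ j, y j = 0 := by
        intro j
        have : j ∈ S := hSuniv ▸ Finset.mem_univ j
        simpa [hS] using this
      apply hx
      funext k
      have := hy0 (i.succAbove k)
      rw [hyk] at this
      simpa using this
    have : 0 < y ⬝ᵥ (L *ᵥ y) := lt_of_le_of_ne hnonneg (Ne.symm hpos)
    rw [hquad]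
    simpa using this
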